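/- arXiv:2506.06577 — 4 statements merged into one kernel-verified Lean document; each statement's English description precedes it below -/
import Mathlib

section
/- The codewords |0̄⟩ and |1̄⟩ of the X–I code Ξ(2m) are fixed by every stabilizer generator: for every Z-generator G_Z and every X-generator G_X one has G_Z |0̄⟩ = |0̄⟩, G_Z |1̄⟩ = |1̄⟩, G_X |0̄⟩ = |0̄⟩, and G_X |1̄⟩ = |1̄⟩. -/
open scoped BigOperators

/-- Bit strings on `2m` qubits. -/
abbrev Bits (m : ℕ) := Fin (2*m) → ZMod 2

/-- The `2m`-qubit Hilbert space, as functions from computational basis labels to `ℂ`. -/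
abbrev QState (m : ℕ) := Bits m → ℂ

/-- Indicator bit string of a finite set of qubits. -/
def indSet (m : ℕ) (S : Finset (Fin (2*m))) : Bits m := fun i => if i ∈ S then 1 else 0

/-- The Pauli-X operator on the set `S`: sends `|x⟩` to `|x + 1_S⟩`. -/
def Xop (m : ℕ) (S : Finset (Fin (2*m))) : QState m →ₗ[ℂ] QState m where
  toFun v := fun x => v (x + indSet m S)
  map_add' _ _ := rfl
  map_smul' _ _ := rfl

/-- The Pauli-Z operator on the set `S`: sends `|x⟩` to `(-1)^{∑_{i∈S} x i} |x⟩`. -/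
def Zop (m : ℕ) (S : Finset (Fin (2*m))) : QState m →ₗ[ℂ] QState m where
  toFun v := fun x => ((-1 : ℂ) ^ (∑ i ∈ S, (x i).val)) * v x
  map_add' u v := by funext x; simp [mul_add]
  map_smul' c v := by funext x; simp; ring

/-- The antipodal involution `τ i = i + m (mod 2m)`. -/
def tau (m : ℕ) (i : Fin (2*m)) : Fin (2*m) :=
  ⟨(i.val + m) % (2*m), Nat.mod_lt _ (by have := i.isLt; omega)⟩

/-- The computational basis state `|x⟩`. -/
def ket (m : ℕ) (x : Bits m) : QState m := fun y => if y = x then 1 else 0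

/-- The pair-equal bit string determined by `b : Fin m → ZMod 2`. -/
def xb (m : ℕ) (b : Fin m → ZMod 2) : Bits m :=
  fun i => b ⟨i.val % m, Nat.mod_lt _ (by have := i.isLt; omega)⟩

/-- The logical codeword `|0̄⟩` of the X–I code `Ξ(2m)`. -/
noncomputable def ket0 (m : ℕ) : QState m :=
  ((Real.sqrt (2 ^ (m-1)) : ℂ))⁻¹ •
    ∑ b ∈ Finset.univ.filter (fun b : Fin m → ZMod 2 => ∑ i, b i = 0), ket m (xb m b)

/-- The logical codeword `|1̄⟩` of the X–I code `Ξ(2m)`. -/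
noncomputable def ket1 (m : ℕ) : QState m :=
  ((Real.sqrt (2 ^ (m-1)) : ℂ))⁻¹ •
    ∑ b ∈ Finset.univ.filter (fun b : Fin m → ZMod 2 => ∑ i, b i = 1), ket m (xb m b)


section Aux

variable {m : ℕ}

lemma tau_val (hm : 0 < m) (i : Fin (2*m)) :
    (tau m i).val = if i.val < m then i.val + m else i.val - m := by
  simp only [tau]
  rcases lt_or_ge i.val m with h | h
  · rw [if_pos h, Nat.mod_eq_of_lt (by omega)]
  · rw [if_neg (by omega)]
    have he : i.val + m = (i.val - m) + 1 * (2*m) := by have := i.isLt; omega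
    rw [he, Nat.add_mul_mod_self_right, Nat.mod_eq_of_lt (by have := i.isLt; omega)]

lemma mod_small (hm : 0 < m) (k : Fin (2*m)) :
    k.val % m = if k.val < m then k.val else k.val - m := by
  rcases lt_or_ge k.val m with h | h
  · rw [if_pos h, Nat.mod_eq_of_lt h]
  · rw [if_neg (by omega), Nat.mod_eq_sub_mod h,
      Nat.mod_eq_of_lt (by have := k.isLt; omega)]

lemma tau_ne (hm : 0 < m) (i : Fin (2*m)) : i ≠ tau m i := by
  simp only [Ne, Fin.ext_iff, tau_val hm]
  have := i.isLt
  split_ifs <;> omega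

lemma tau_tau (hm : 0 < m) (i : Fin (2*m)) : tau m (tau m i) = i := by
  have h1 := tau_val hm (tau m i)
  have h2 := tau_val hm i
  have := i.isLt
  apply Fin.ext
  rw [h1, h2]
  split_ifs <;> omega

lemma tau_mod (hm : 0 < m) (i : Fin (2*m)) : (tau m i).val % m = i.val % m := by
  rw [mod_small hm, mod_small hm, tau_val hm]
  have := i.isLt
  split_ifs <;> omega

lemma mem_pair_iff (hm : 0 < m) (k i : Fin (2*m)) :
    k.val % m = i.val % m ↔ (k = i ∨ k = tau m i) := by
  simp only [Fin.ext_iff, mod_small hm, tau_val hm]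
  have := i.isLt; have := k.isLt
  split_ifs <;> omega

lemma zmod2_add_self : ∀ a : ZMod 2, a + a = 0 := by decide

lemma bits_add_self (f : Bits m) : f + f = 0 := by
  funext k; exact zmod2_add_self (f k)

lemma Zop_ket_xb (hm : 0 < m) (i : Fin (2*m)) (b : Fin m → ZMod 2) :
    Zop m {i, tau m i} (ket m (xb m b)) = ket m (xb m b) := by
  funext x
  simp only [Zop, LinearMap.coe_mk, AddHom.coe_mk, ket]
  by_cases hx : x = xb m b
  · subst hx
    rw [Finset.sum_pair (tau_ne hm i)]
    have hxb : xb m b (tau m i) = xb m b i := by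
      simp only [xb]
      congr 1
      exact Fin.ext (tau_mod hm i)
    rw [hxb, ← two_mul, pow_mul]
    norm_num
  · simp [hx]

lemma Xop_ket (S : Finset (Fin (2*m))) (w : Bits m) :
    Xop m S (ket m w) = ket m (w + indSet m S) := by
  funext x
  simp only [Xop, LinearMap.coe_mk, AddHom.coe_mk, ket]
  have : x + indSet m S = w ↔ x = w + indSet m S := by
    constructor
    · rintro rfl; rw [add_assoc, bits_add_self, add_zero]
    · rintro rfl; rw [add_assoc, bits_add_self, add_zero]
  simp only [this]

/-- Residue of a qubit index in `Fin m`. -/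
def resid (hm : 0 < m) (i : Fin (2*m)) : Fin m := ⟨i.val % m, Nat.mod_lt _ hm⟩

/-- The pair of flipped logical positions. -/
def dvec (hm : 0 < m) (i j : Fin (2*m)) : Fin m → ZMod 2 :=
  fun r => (if r = resid hm i then 1 else 0) + (if r = resid hm j then 1 else 0)

lemma sum_dvec (hm : 0 < m) (i j : Fin (2*m)) (hij : resid hm i ≠ resid hm j) :
    ∑ r, dvec hm i j r = 0 := by
  simp only [dvec, Finset.sum_add_distrib, Finset.sum_ite_eq', Finset.mem_univ, if_true]
  exact zmod2_add_self 1

lemma xb_add_ind (hm : 0 < m) (i j : Fin (2*m)) (hij : resid hm i ≠ resid hm j)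
    (b : Fin m → ZMod 2) :
    xb m b + indSet m {i, tau m i, j, tau m j} = xb m (b + dvec hm i j) := by
  funext k
  have hxb : ∀ c : Fin m → ZMod 2, xb m c k = c (resid hm k) := fun _ => rfl
  simp only [Pi.add_apply, hxb, indSet, dvec]
  congr 1
  have hmem : k ∈ ({i, tau m i, j, tau m j} : Finset (Fin (2*m))) ↔
      (resid hm k = resid hm i ∨ resid hm k = resid hm j) := by
    simp only [Finset.mem_insert, Finset.mem_singleton]
    have h1 := mem_pair_iff hm k i
    have h2 := mem_pair_iff hm k j
    have e1 : resid hm k = resid hm i ↔ k.val % m = i.val % m := Fin.ext_iff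
    have e2 : resid hm k = resid hm j ↔ k.val % m = j.val % m := Fin.ext_iff
    rw [e1, e2, h1, h2]
    tauto
  by_cases h1 : resid hm k = resid hm i <;> by_cases h2 : resid hm k = resid hm j
  · exact absurd (h1 ▸ h2) (h1 ▸ hij)
  · rw [if_pos (hmem.mpr (Or.inl h1)), if_pos h1, if_neg h2, add_zero]
  · rw [if_pos (hmem.mpr (Or.inr h2)), if_neg h1, if_pos h2, zero_add]
  · rw [if_neg (fun h => by tauto), if_neg h1, if_neg h2, add_zero]

lemma sum_shift (d : Fin m → ZMod 2) (hd : ∑ r, d r = 0) (p : ZMod 2) :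
    ∑ b ∈ Finset.univ.filter (fun b : Fin m → ZMod 2 => ∑ i, b i = p), ket m (xb m (b + d))
      = ∑ b ∈ Finset.univ.filter (fun b : Fin m → ZMod 2 => ∑ i, b i = p), ket m (xb m b) := by
  refine Finset.sum_equiv (Equiv.addRight d) ?_ ?_
  · intro b
    simp [Finset.sum_add_distrib, hd]
  · intro b _
    rfl

end Aux

/-- The codewords `|0̄⟩` and `|1̄⟩` of the X–I code `Ξ(2m)` are fixed by every
Z-generator and every X-generator. -/
theorem XI_codewords_stabilized (m : ℕ) (hm : 2 ≤ m) :
    (∀ i : Fin (2*m),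
        Zop m {i, tau m i} (ket0 m) = ket0 m ∧ Zop m {i, tau m i} (ket1 m) = ket1 m) ∧
    (∀ i j : Fin (2*m), ({i, tau m i} : Finset (Fin (2*m))) ≠ {j, tau m j} →
        Xop m {i, tau m i, j, tau m j} (ket0 m) = ket0 m ∧
        Xop m {i, tau m i, j, tau m j} (ket1 m) = ket1 m) := by

  have hm0 : 0 < m := by omega
  constructor
  · intro i
    constructor
    · unfold ket0
      rw [map_smul, map_sum]
      congr 1
      exact Finset.sum_congr rfl (fun b _ => Zop_ket_xb hm0 i b)
    · unfold ket1
      rw [map_smul, map_sum]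
      congr 1
      exact Finset.sum_congr rfl (fun b _ => Zop_ket_xb hm0 i b)
  · intro i j hij
    have hres : resid hm0 i ≠ resid hm0 j := by
      intro h
      apply hij
      have : j.val % m = i.val % m := (Fin.ext_iff.mp h).symm
      rcases (mem_pair_iff hm0 j i).mp this with rfl | rfl
      · rfl
      · rw [tau_tau hm0 i, Finset.pair_comm]
    have hd := sum_dvec hm0 i j hres
    have key : ∀ p : ZMod 2,
        ∑ b ∈ Finset.univ.filter (fun b : Fin m → ZMod 2 => ∑ i, b i = p),
            Xop m {i, tau m i, j, tau m j} (ket m (xb m b))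
          = ∑ b ∈ Finset.univ.filter (fun b : Fin m → ZMod 2 => ∑ i, b i = p),
            ket m (xb m b) := by
      intro p
      rw [← sum_shift (dvec hm0 i j) hd p]
      refine Finset.sum_congr rfl (fun b _ => ?_)
      rw [Xop_ket, xb_add_ind hm0 i j hres]
    constructor
    · unfold ket0
      rw [map_smul, map_sum]
      congr 1
      exact key 0
    · unfold ket1
      rw [map_smul, map_sum]
      congr 1
      exact key 1
end

section
/- The code space of the X–I code Ξ(2m), i.e. the subspace of states fixed by every Z-generator and every X-generator, is exactly the two-dimensional span of |0̄⟩ and |1̄⟩; in particular Ξ(2m) encodes exactly one logical qubit. -/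
open scoped BigOperators

/-- The code space of the X–I code `Ξ(2m)`: all states fixed by every Z-generator
and every X-generator. -/
def XIcodeSpace (m : ℕ) : Set (QState m) :=
  {v | (∀ i : Fin (2*m), Zop m {i, tau m i} v = v) ∧
       (∀ i j : Fin (2*m), ({i, tau m i} : Finset (Fin (2*m))) ≠ {j, tau m j} →
          Xop m {i, tau m i, j, tau m j} v = v)}

namespace XIaux

variable {m : ℕ}

/-- Embed `Fin m` into the first half of `Fin (2*m)`. -/
def iota (m : ℕ) (i : Fin m) : Fin (2*m) := ⟨i.val, by have := i.isLt; omega⟩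

/-- Reduce an index mod `m`. -/
def pmod (m : ℕ) (i : Fin (2*m)) : Fin m :=
  ⟨i.val % m, Nat.mod_lt _ (by have := i.isLt; omega)⟩

lemma mod_m_eq {k : ℕ} (hk : k < 2*m) : k % m = if k < m then k else k - m := by
  split_ifs with h
  · exact Nat.mod_eq_of_lt h
  · have h1 : k - m < m := by omega
    have : k % m = (k - m) % m := by
      conv_lhs => rw [show k = (k - m) + m by omega]
      simp [Nat.add_mod_right]
    rw [this, Nat.mod_eq_of_lt h1]

lemma tau_val (i : Fin (2*m)) :
    (tau m i).val = if i.val < m then i.val + m else i.val - m := by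
  have hi := i.isLt
  show (i.val + m) % (2*m) = _
  split_ifs with h
  · exact Nat.mod_eq_of_lt (by omega)
  · have : (i.val + m) % (2*m) = (i.val + m - 2*m) % (2*m) := by
      conv_lhs => rw [show i.val + m = (i.val + m - 2*m) + 2*m by omega]
      simp [Nat.add_mod_right]
    rw [this, Nat.mod_eq_of_lt (by omega)]; omega

lemma tau_ne (i : Fin (2*m)) : tau m i ≠ i := by
  have hi := i.isLt
  intro h
  have := congrArg Fin.val h
  rw [tau_val] at this
  split_ifs at this <;> omega

lemma pmod_eq_iff {k i : Fin (2*m)} :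
    pmod m k = pmod m i ↔ k = i ∨ k = tau m i := by
  have hk := k.isLt; have hi := i.isLt
  constructor
  · intro h
    have h' : k.val % m = i.val % m := congrArg Fin.val h
    rw [mod_m_eq hk, mod_m_eq hi] at h'
    rcases Nat.lt_or_ge k.val i.val with hlt | hge
    all_goals {
      have : k = i ∨ k.val = (tau m i).val := by
        rw [tau_val]; split_ifs at h' ⊢ <;>
          first
            | (left; exact Fin.ext (by omega))
            | (right; omega)
      rcases this with h1 | h1
      · exact Or.inl h1
      · exact Or.inr (Fin.ext h1) }
  · rintro (rfl | rfl)
    · rfl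
    · apply Fin.ext
      show (tau m i).val % m = i.val % m
      rw [mod_m_eq (tau m i).isLt, tau_val, mod_m_eq hi]
      split_ifs <;> omega

lemma mem_pair {k i : Fin (2*m)} :
    k ∈ ({i, tau m i} : Finset (Fin (2*m))) ↔ pmod m k = pmod m i := by
  simp [pmod_eq_iff]

lemma pmod_iota (i : Fin m) : pmod m (iota m i) = i :=
  Fin.ext (Nat.mod_eq_of_lt i.isLt)

end XIaux
namespace XIaux
variable {m : ℕ}

lemma xb_apply (b : Fin m → ZMod 2) (i : Fin (2*m)) : xb m b i = b (pmod m i) := rfl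

lemma xb_iota (b : Fin m → ZMod 2) (i : Fin m) : xb m b (iota m i) = b i := by
  rw [xb_apply, pmod_iota]

/-- pair-equal predicate -/
def PE (m : ℕ) (x : Bits m) : Prop := ∀ i, x (tau m i) = x i

def bOf (m : ℕ) (x : Bits m) : Fin m → ZMod 2 := fun i => x (iota m i)

lemma pmod_tau (k : Fin (2*m)) : pmod m (tau m k) = pmod m k :=
  pmod_eq_iff.mpr (Or.inr rfl)

lemma PE_xb (b : Fin m → ZMod 2) : PE m (xb m b) := by
  intro i; rw [xb_apply, xb_apply, pmod_tau]

lemma bOf_xb (b : Fin m → ZMod 2) : bOf m (xb m b) = b := by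
  funext i; exact xb_iota b i

lemma xb_injective : Function.Injective (xb m) := by
  intro b c h
  rw [← bOf_xb (m := m) b, h, bOf_xb]

lemma xb_bOf {x : Bits m} (h : PE m x) : xb m (bOf m x) = x := by
  funext k
  rw [xb_apply]
  show x (iota m (pmod m k)) = x k
  by_cases hk : k.val < m
  · congr 1; exact Fin.ext (by simp [iota, pmod, Nat.mod_eq_of_lt hk])
  · have hkt : tau m (iota m (pmod m k)) = k := by
      apply Fin.ext
      rw [tau_val]
      have hk2 := k.isLt
      simp only [iota, pmod, mod_m_eq hk2]
      split_ifs <;> omega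
    conv_rhs => rw [← hkt]
    exact (h _).symm

lemma xb_add (b c : Fin m → ZMod 2) : xb m (b + c) = xb m b + xb m c := rfl

lemma PE_add {x y : Bits m} (hx : PE m x) (hy : PE m y) : PE m (x + y) := by
  intro i; simp only [Pi.add_apply, hx i, hy i]

lemma ket_apply (x y : Bits m) : ket m x y = if y = x then (1:ℂ) else 0 := rfl

/-- normalization constant -/
noncomputable def nc (m : ℕ) : ℂ := ((Real.sqrt (2 ^ (m-1)) : ℂ))

lemma nc_ne_zero : nc m ≠ 0 := by
  simp only [nc, ne_eq, Complex.ofReal_eq_zero]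
  positivity

lemma sum_ket_xb (s : Finset (Fin m → ZMod 2)) (b : Fin m → ZMod 2) :
    (∑ c ∈ s, ket m (xb m c)) (xb m b) = if b ∈ s then (1:ℂ) else 0 := by
  rw [Finset.sum_apply]
  have : ∀ c ∈ s, ket m (xb m c) (xb m b) = if c = b then (1:ℂ) else 0 := by
    intro c _
    rw [ket_apply]
    by_cases h : c = b
    · simp [h]
    · rw [if_neg h, if_neg (fun hh => h (xb_injective hh).symm)]
  rw [Finset.sum_congr rfl this, Finset.sum_ite_eq' s b (fun _ => (1:ℂ))]

lemma ket0_xb (b : Fin m → ZMod 2) :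
    ket0 m (xb m b) = if (∑ i, b i) = 0 then (nc m)⁻¹ else 0 := by
  show (nc m)⁻¹ * _ = _
  rw [sum_ket_xb]
  simp [Finset.mem_filter, mul_ite]

lemma ket1_xb (b : Fin m → ZMod 2) :
    ket1 m (xb m b) = if (∑ i, b i) = 1 then (nc m)⁻¹ else 0 := by
  show (nc m)⁻¹ * _ = _
  rw [sum_ket_xb]
  simp [Finset.mem_filter, mul_ite]

lemma ket0_ne (x : Bits m) (h : ¬ PE m x) : ket0 m x = 0 := by
  show (nc m)⁻¹ * _ = 0
  rw [Finset.sum_apply]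
  rw [Finset.sum_eq_zero, mul_zero]
  intro c _
  rw [ket_apply, if_neg]
  intro hx; exact h (hx ▸ PE_xb c)

lemma ket1_ne (x : Bits m) (h : ¬ PE m x) : ket1 m x = 0 := by
  show (nc m)⁻¹ * _ = 0
  rw [Finset.sum_apply]
  rw [Finset.sum_eq_zero, mul_zero]
  intro c _
  rw [ket_apply, if_neg]
  intro hx; exact h (hx ▸ PE_xb c)

end XIaux
namespace XIaux
variable {m : ℕ}

lemma Zop_apply (S : Finset (Fin (2*m))) (v : QState m) (x : Bits m) :
    Zop m S v x = ((-1 : ℂ) ^ (∑ i ∈ S, (x i).val)) * v x := rfl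

lemma Xop_apply (S : Finset (Fin (2*m))) (v : QState m) (x : Bits m) :
    Xop m S v x = v (x + indSet m S) := rfl

/-- standard basis vector -/
def eb (m : ℕ) (a : Fin m) : Fin m → ZMod 2 := fun k => if k = a then 1 else 0

lemma sum_eb (a : Fin m) : ∑ i, eb m a i = 1 := by
  simp [eb]

lemma pair_sum_val {x : Bits m} (hx : PE m x) (i : Fin (2*m)) :
    (-1 : ℂ) ^ (∑ k ∈ ({i, tau m i} : Finset (Fin (2*m))), (x k).val) = 1 := by
  rw [Finset.sum_pair (Ne.symm (tau_ne i)), hx i, ← two_mul, pow_mul]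
  norm_num

lemma pair_ne_iff {i j : Fin (2*m)} :
    ({i, tau m i} : Finset (Fin (2*m))) ≠ {j, tau m j} ↔ pmod m i ≠ pmod m j := by
  constructor
  · intro h hp
    apply h
    ext k
    rw [mem_pair, mem_pair, hp]
  · intro h hq
    apply h
    have : i ∈ ({j, tau m j} : Finset (Fin (2*m))) := hq ▸ Finset.mem_insert_self _ _
    exact mem_pair.mp this

lemma indSet_eq {i j : Fin (2*m)} (h : pmod m i ≠ pmod m j) :
    indSet m {i, tau m i, j, tau m j} = xb m (eb m (pmod m i) + eb m (pmod m j)) := by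
  funext k
  show (if k ∈ ({i, tau m i, j, tau m j} : Finset (Fin (2*m))) then (1:ZMod 2) else 0) = _
  have hmem : k ∈ ({i, tau m i, j, tau m j} : Finset (Fin (2*m))) ↔
      pmod m k = pmod m i ∨ pmod m k = pmod m j := by
    have h1 := @mem_pair m k i
    have h2 := @mem_pair m k j
    simp only [Finset.mem_insert, Finset.mem_singleton] at h1 h2 ⊢
    tauto
  rw [xb_apply]
  show _ = eb m (pmod m i) (pmod m k) + eb m (pmod m j) (pmod m k)
  simp only [eb]
  split_ifs with h0 h1 h2 h1 h2 <;>
    simp_all [eq_comm]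

lemma zop_fixes_of_supp {v : QState m} (hv : ∀ x, ¬ PE m x → v x = 0)
    (i : Fin (2*m)) : Zop m {i, tau m i} v = v := by
  funext x
  rw [Zop_apply]
  by_cases hx : PE m x
  · rw [pair_sum_val hx, one_mul]
  · rw [hv x hx, mul_zero]

lemma sum_bOf_add_xb {x : Bits m} (hx : PE m x) (c : Fin m → ZMod 2) :
    bOf m (x + xb m c) = bOf m x + c := by
  funext i
  simp only [bOf, Pi.add_apply, xb_iota]

lemma PE_add_xb_iff {x : Bits m} (c : Fin m → ZMod 2) :
    PE m (x + xb m c) ↔ PE m x := by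
  constructor
  · intro h
    have : x = (x + xb m c) + xb m c := by
      funext k; simp [add_assoc, CharTwo.add_self_eq_zero]
    rw [this]; exact PE_add h (PE_xb c)
  · intro h; exact PE_add h (PE_xb c)

lemma ket0_X {i j : Fin (2*m)} (h : ({i, tau m i} : Finset (Fin (2*m))) ≠ {j, tau m j}) :
    Xop m {i, tau m i, j, tau m j} (ket0 m) = ket0 m := by
  have hp := pair_ne_iff.mp h
  funext x
  rw [Xop_apply, indSet_eq hp]
  set c := eb m (pmod m i) + eb m (pmod m j) with hc
  have hsc : ∑ k, c k = 0 := by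
    simp only [hc, Pi.add_apply, Finset.sum_add_distrib, sum_eb]
    decide
  by_cases hx : PE m x
  · conv_lhs => rw [← xb_bOf hx, ← xb_add]
    conv_rhs => rw [← xb_bOf hx]
    rw [ket0_xb, ket0_xb]
    congr 1
    simp [Finset.sum_add_distrib, hsc]
  · rw [ket0_ne _ hx, ket0_ne]
    rw [PE_add_xb_iff]; exact hx

lemma ket1_X {i j : Fin (2*m)} (h : ({i, tau m i} : Finset (Fin (2*m))) ≠ {j, tau m j}) :
    Xop m {i, tau m i, j, tau m j} (ket1 m) = ket1 m := by
  have hp := pair_ne_iff.mp h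
  funext x
  rw [Xop_apply, indSet_eq hp]
  set c := eb m (pmod m i) + eb m (pmod m j) with hc
  have hsc : ∑ k, c k = 0 := by
    simp only [hc, Pi.add_apply, Finset.sum_add_distrib, sum_eb]
    decide
  by_cases hx : PE m x
  · conv_lhs => rw [← xb_bOf hx, ← xb_add]
    conv_rhs => rw [← xb_bOf hx]
    rw [ket1_xb, ket1_xb]
    congr 1
    simp [Finset.sum_add_distrib, hsc]
  · rw [ket1_ne _ hx, ket1_ne]
    rw [PE_add_xb_iff]; exact hx

lemma ket0_mem : ket0 m ∈ XIcodeSpace m := by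
  refine ⟨fun i => zop_fixes_of_supp (fun x hx => ket0_ne x hx) i, fun i j h => ket0_X h⟩

lemma ket1_mem : ket1 m ∈ XIcodeSpace m := by
  refine ⟨fun i => zop_fixes_of_supp (fun x hx => ket1_ne x hx) i, fun i j h => ket1_X h⟩

end XIaux
namespace XIaux
variable {m : ℕ}

lemma supp_of_mem {v : QState m} (hv : v ∈ XIcodeSpace m) :
    ∀ x, ¬ PE m x → v x = 0 := by
  intro x hx
  rw [PE] at hx
  push_neg at hx
  obtain ⟨i, hi⟩ := hx
  have hZ := congrFun (hv.1 i) x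
  rw [Zop_apply, Finset.sum_pair (Ne.symm (tau_ne i))] at hZ
  have hval : (x i).val + (x (tau m i)).val = 1 := by
    have h2 : ∀ a b : ZMod 2, a ≠ b → a.val + b.val = 1 := by decide
    have := h2 _ _ (fun hh => hi hh.symm)
    omega
  rw [hval, pow_one, neg_one_mul] at hZ
  have : (2:ℂ) * v x = 0 := by linear_combination -hZ
  simpa using this

lemma step_of_mem {v : QState m} (hv : v ∈ XIcodeSpace m)
    {a b : Fin m} (hab : a ≠ b) (c : Fin m → ZMod 2) :
    v (xb m (c + (eb m a + eb m b))) = v (xb m c) := by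
  have hpne : ({iota m a, tau m (iota m a)} : Finset (Fin (2*m))) ≠
      {iota m b, tau m (iota m b)} := by
    rw [pair_ne_iff, pmod_iota, pmod_iota]; exact hab
  have hX := congrFun (hv.2 _ _ hpne) (xb m c)
  rw [Xop_apply, indSet_eq (by rw [pmod_iota, pmod_iota]; exact hab),
    pmod_iota, pmod_iota, ← xb_add] at hX
  exact hX

lemma key_of_mem {v : QState m} (hv : v ∈ XIcodeSpace m) :
    ∀ n (b b' : Fin m → ZMod 2),
      (Finset.univ.filter fun i => b i ≠ b' i).card = n →
      (∑ i, b i) = (∑ i, b' i) → v (xb m b) = v (xb m b') := by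
  intro n
  induction n using Nat.strong_induction_on with
  | _ n ih =>
    intro b b' hcard hsum
    rcases Nat.eq_zero_or_pos n with h0 | hpos
    · have : b = b' := by
        funext i
        by_contra hne
        have : i ∈ Finset.univ.filter fun i => b i ≠ b' i := by
          simp [hne]
        rw [Finset.card_eq_zero.mp (hcard.trans h0)] at this
        exact absurd this (Finset.notMem_empty i)
      rw [this]
    · -- card is even
      set D := Finset.univ.filter fun i => b i ≠ b' i with hD
      have hpar : ((n : ZMod 2)) = 0 := by
        have hsplit : (∑ i, (b i + b' i)) = ∑ i ∈ D, (b i + b' i) +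
            ∑ i ∈ Finset.univ.filter (fun i => ¬ b i ≠ b' i), (b i + b' i) :=
          (Finset.sum_filter_add_sum_filter_not _ _ _).symm
        have h1 : ∑ i ∈ D, (b i + b' i) = (D.card : ZMod 2) := by
          rw [Finset.sum_congr rfl (fun i hi => ?_), Finset.sum_const, nsmul_eq_mul, mul_one]
          have : b i ≠ b' i := (Finset.mem_filter.mp hi).2
          revert this
          generalize b i = u; generalize b' i = w
          revert u w; decide
        have h2 : ∑ i ∈ Finset.univ.filter (fun i => ¬ b i ≠ b' i), (b i + b' i) = 0 := by
          apply Finset.sum_eq_zero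
          intro i hi
          have : b i = b' i := not_not.mp (Finset.mem_filter.mp hi).2
          rw [this, CharTwo.add_self_eq_zero]
        have htot : (∑ i, (b i + b' i)) = (0 : ZMod 2) := by
          rw [Finset.sum_add_distrib, hsum, CharTwo.add_self_eq_zero]
        rw [hsplit, h1, h2, add_zero, hcard] at htot
        exact htot
      have h2le : 2 ≤ n := by
        rcases n with _ | _ | n
        · omega
        · exfalso; revert hpar; decide
        · omega
      have hDcard : 1 < D.card := by omega
      obtain ⟨a, ha, c, hc, hac⟩ := Finset.one_lt_card.mp hDcard
      set b'' := b + (eb m a + eb m c) with hb''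
      have hstep : v (xb m b'') = v (xb m b) := step_of_mem hv hac b
      have z2 : ∀ u w : ZMod 2, u ≠ w → u + 1 = w := by decide
      have hbi : ∀ i, b'' i = b i + (if i = a then 1 else 0) + (if i = c then 1 else 0) := by
        intro i; simp [hb'', eb, add_assoc]
      have hDnew : (Finset.univ.filter fun i => b'' i ≠ b' i) = (D.erase a).erase c := by
        ext i
        simp only [Finset.mem_filter, Finset.mem_erase, Finset.mem_univ, true_and, hD]
        rw [hbi i]
        by_cases hia : i = a <;> by_cases hic : i = c
        · exact absurd (hia.symm.trans hic) hac
        · rw [if_pos hia, if_neg hic, add_zero]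
          have hba : b i ≠ b' i := by rw [hia]; exact (Finset.mem_filter.mp ha).2
          constructor
          · intro h; exact absurd (z2 _ _ hba) h
          · intro h; exact absurd hia h.2.1
        · rw [if_neg hia, if_pos hic, add_zero]
          have hbc : b i ≠ b' i := by rw [hic]; exact (Finset.mem_filter.mp hc).2
          constructor
          · intro h; exact absurd (z2 _ _ hbc) h
          · intro h; exact absurd hic h.1
        · rw [if_neg hia, if_neg hic, add_zero, add_zero]
          tauto
      have hcard'' : (Finset.univ.filter fun i => b'' i ≠ b' i).card = n - 2 := by
        rw [hDnew, Finset.card_erase_of_mem (Finset.mem_erase.mpr ⟨Ne.symm hac, hc⟩),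
          Finset.card_erase_of_mem ha, hcard]
        omega
      have hsum'' : (∑ i, b'' i) = ∑ i, b' i := by
        rw [hb'']
        simp only [Pi.add_apply, Finset.sum_add_distrib, sum_eb]
        rw [← hsum]
        generalize (∑ i, b i) = s
        revert s; decide
      have := ih (n - 2) (by omega) b'' b' hcard'' hsum''
      rw [← hstep, this]

end XIaux
namespace XIaux
variable {m : ℕ}

lemma zmod2_cases (z : ZMod 2) : z = 0 ∨ z = 1 := by revert z; decide

lemma decomp {v : QState m} (hv : v ∈ XIcodeSpace m) (hm : 0 < m) :
    v = (nc m * v (xb m 0)) • ket0 m +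
        (nc m * v (xb m (eb m ⟨0, hm⟩))) • ket1 m := by
  funext x
  have hrhs : ((nc m * v (xb m 0)) • ket0 m +
      (nc m * v (xb m (eb m ⟨0, hm⟩))) • ket1 m) x
      = (nc m * v (xb m 0)) * ket0 m x + (nc m * v (xb m (eb m ⟨0, hm⟩))) * ket1 m x := rfl
  rw [hrhs]
  by_cases hx : PE m x
  · have hxx : x = xb m (bOf m x) := (xb_bOf hx).symm
    rw [hxx, ket0_xb, ket1_xb]
    rcases zmod2_cases (∑ i, bOf m x i) with hs | hs
    · rw [if_pos hs, if_neg (by rw [hs]; decide), mul_zero, add_zero]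
      have hk := key_of_mem hv _ (bOf m x) 0 rfl (by rw [hs]; simp)
      rw [hk, mul_assoc, mul_comm (v (xb m 0)), ← mul_assoc,
        mul_inv_cancel₀ nc_ne_zero, one_mul]
    · rw [if_neg (by rw [hs]; decide), if_pos hs, mul_zero, zero_add]
      have hk := key_of_mem hv _ (bOf m x) (eb m ⟨0, hm⟩) rfl (by rw [hs, sum_eb])
      rw [hk, mul_assoc, mul_comm (v (xb m (eb m ⟨0, hm⟩))), ← mul_assoc,
        mul_inv_cancel₀ nc_ne_zero, one_mul]
  · rw [supp_of_mem hv x hx, ket0_ne x hx, ket1_ne x hx, mul_zero, mul_zero, add_zero]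

lemma span_mem {v : QState m} (hv : v ∈ Submodule.span ℂ {ket0 m, ket1 m}) :
    v ∈ XIcodeSpace m := by
  rw [Submodule.mem_span_pair] at hv
  obtain ⟨c, d, hcd⟩ := hv
  subst hcd
  constructor
  · intro i
    rw [map_add, map_smul, map_smul, ket0_mem.1 i, ket1_mem.1 i]
  · intro i j h
    rw [map_add, map_smul, map_smul, ket0_mem.2 i j h, ket1_mem.2 i j h]

lemma li (hm : 0 < m) : LinearIndependent ℂ ![ket0 m, ket1 m] := by
  rw [LinearIndependent.pair_iff]
  intro s t hst
  have hinv : (nc m : ℂ)⁻¹ ≠ 0 := inv_ne_zero nc_ne_zero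
  have h0 := congrFun hst (xb m 0)
  have h1 := congrFun hst (xb m (eb m ⟨0, hm⟩))
  have e00 : ket0 m (xb m 0) = (nc m)⁻¹ := by rw [ket0_xb]; simp
  have e10 : ket1 m (xb m 0) = 0 := by rw [ket1_xb]; simp
  have e01 : ket0 m (xb m (eb m ⟨0, hm⟩)) = 0 := by
    rw [ket0_xb, sum_eb, if_neg (by decide)]
  have e11 : ket1 m (xb m (eb m ⟨0, hm⟩)) = (nc m)⁻¹ := by
    rw [ket1_xb, sum_eb, if_pos rfl]
  have hh0 : s * ket0 m (xb m 0) + t * ket1 m (xb m 0) = 0 := h0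
  have hh1 : s * ket0 m (xb m (eb m ⟨0, hm⟩)) + t * ket1 m (xb m (eb m ⟨0, hm⟩)) = 0 := h1
  rw [e00, e10, mul_zero, add_zero] at hh0
  rw [e01, e11, mul_zero, zero_add] at hh1
  constructor
  · rcases mul_eq_zero.mp hh0 with h | h
    · exact h
    · exact absurd h hinv
  · rcases mul_eq_zero.mp hh1 with h | h
    · exact h
    · exact absurd h hinv

end XIaux
/-- The code space of `Ξ(2m)` is exactly the two-dimensional span of `|0̄⟩` and `|1̄⟩`;
in particular `Ξ(2m)` encodes exactly one logical qubit. -/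
theorem XI_codeSpace_eq_span (m : ℕ) (hm : 2 ≤ m) :
    XIcodeSpace m = (Submodule.span ℂ {ket0 m, ket1 m} : Submodule ℂ (QState m)) ∧
    Module.finrank ℂ (Submodule.span ℂ {ket0 m, ket1 m} : Submodule ℂ (QState m)) = 2 := by
  have hm0 : 0 < m := by omega
  constructor
  · ext v
    constructor
    · intro hv
      rw [SetLike.mem_coe, Submodule.mem_span_pair]
      exact ⟨_, _, (XIaux.decomp hv hm0).symm⟩
    · intro hv
      exact XIaux.span_mem hv
  · have hli := XIaux.li (m := m) hm0
    have hset : ({ket0 m, ket1 m} : Set (QState m)) = Set.range ![ket0 m, ket1 m] := by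
      simp [Matrix.range_cons, Matrix.range_empty, Set.pair_comm]
    rw [hset, finrank_span_eq_card hli, Fintype.card_fin]
end

section
/- The logical operators X̄ = Xop {i, τ i} (for any qubit i) and Z̄ = Zop {0, 1, …, m−1} of the X–I code Ξ(2m) anticommute: X̄ ∘ Z̄ = − Z̄ ∘ X̄. -/
open scoped BigOperators

/-- The set `{0, 1, …, m−1}` of qubits, one representative from each antipodal pair. -/
def lowerHalf (m : ℕ) : Finset (Fin (2*m)) :=
  Finset.univ.filter (fun i : Fin (2*m) => i.val < m)

/-- The logical operators `X̄ = Xop {i, τ i}` and `Z̄ = Zop {0, …, m−1}` of the X–I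
code `Ξ(2m)` anticommute: `X̄ ∘ Z̄ = − Z̄ ∘ X̄`. -/
theorem XI_logical_anticommute (m : ℕ) (hm : 2 ≤ m) (i : Fin (2*m)) :
    (Xop m {i, tau m i}).comp (Zop m (lowerHalf m)) =
      -((Zop m (lowerHalf m)).comp (Xop m {i, tau m i})) := by
  have hmpos : 0 < m := by omega
  have htau_val : (tau m i).val = if i.val < m then i.val + m else i.val - m := by
    have hlt := i.isLt
    simp only [tau]
    split <;> rename_i h
    · exact Nat.mod_eq_of_lt (by omega)
    · rw [Nat.mod_eq_sub_mod (by omega)]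
      have h2 : i.val + m - 2*m = i.val - m := by omega
      rw [h2, Nat.mod_eq_of_lt (by omega)]
  have hne : i ≠ tau m i := by
    intro h
    have h2 := congrArg Fin.val h
    rw [htau_val] at h2; have := i.isLt; split at h2 <;> omega
  apply LinearMap.ext; intro v
  funext x
  simp only [LinearMap.comp_apply, LinearMap.neg_apply, Xop, Zop, LinearMap.coe_mk,
    AddHom.coe_mk, Pi.neg_apply]
  have hsum_s : ∑ j ∈ lowerHalf m, (indSet m {i, tau m i} j).val = 1 := by
    have h1 : ∀ j, (indSet m {i, tau m i} j).val
        = if j ∈ ({i, tau m i} : Finset (Fin (2*m))) then 1 else 0 := by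
      intro j; simp only [indSet]; split <;> rfl
    simp_rw [h1]
    rw [Finset.sum_ite_mem, Finset.sum_const, smul_eq_mul, mul_one]
    have hcard : lowerHalf m ∩ {i, tau m i} =
        (if i.val < m then {i} else {tau m i} : Finset (Fin (2*m))) := by
      ext j
      simp only [lowerHalf, Finset.mem_inter, Finset.mem_filter, Finset.mem_univ, true_and,
        Finset.mem_insert, Finset.mem_singleton]
      split <;> rename_i h <;> simp only [Finset.mem_singleton]
      · constructor
        · rintro ⟨hj, rfl | rfl⟩
          · rfl
          · rw [htau_val] at hj; simp [h] at hj
        · rintro rfl; exact ⟨h, Or.inl rfl⟩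
      · constructor
        · rintro ⟨hj, rfl | rfl⟩
          · omega
          · rfl
        · rintro rfl
          refine ⟨?_, Or.inr rfl⟩
          rw [htau_val]; have := i.isLt; simp [h]; omega
    rw [hcard]; split <;> simp
  have key : ((-1:ℂ)) ^ (∑ j ∈ lowerHalf m, ((x + indSet m {i, tau m i}) j).val)
      = -((-1:ℂ) ^ (∑ j ∈ lowerHalf m, (x j).val)) := by
    have hmod : (∑ j ∈ lowerHalf m, ((x + indSet m {i, tau m i}) j).val) % 2
        = ((∑ j ∈ lowerHalf m, (x j).val) + 1) % 2 := by
      have step : ∀ j, ((x + indSet m {i, tau m i}) j).val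
          = ((x j).val + (indSet m {i, tau m i} j).val) % 2 := by
        intro j; rw [Pi.add_apply, ZMod.val_add]
      simp_rw [step]
      rw [← Finset.sum_nat_mod, Finset.sum_add_distrib, hsum_s]
    rw [neg_one_pow_eq_pow_mod_two, hmod, ← neg_one_pow_eq_pow_mod_two, pow_succ]
    ring
  rw [key]; ring
end

section
/- (Full Polytope Symmetry, part 2) Let σ be any permutation of the 2m qubits commuting with the antipodal involution (σ ∘ τ = τ ∘ σ), and let P_σ be the induced permutation operator sending |x⟩ to |x ∘ σ⁻¹⟩. Then P_σ preserves the code space of the X–I code Ξ(2m); in fact P_σ fixes both codewords: P_σ |0̄⟩ = |0̄⟩ and P_σ |1̄⟩ = |1̄⟩. -/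
open scoped BigOperators

/-- The permutation operator `P_σ` induced by a permutation `σ` of the qubits:
it sends `|x⟩` to `|x ∘ σ⁻¹⟩`. -/
def Pperm (m : ℕ) (σ : Equiv.Perm (Fin (2*m))) : QState m →ₗ[ℂ] QState m where
  toFun v := fun y => v (y ∘ σ)
  map_add' _ _ := rfl
  map_smul' _ _ := rfl


lemma tau_val_mod (m : ℕ) (i : Fin (2*m)) :
    (tau m i).val % m = i.val % m := by
  have hi := i.isLt
  show ((i.val + m) % (2*m)) % m = i.val % m
  rcases Nat.lt_or_ge i.val m with h | h
  · have h1 : (i.val + m) % (2*m) = i.val + m := Nat.mod_eq_of_lt (by omega)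
    rw [h1, Nat.add_mod_right]
  · have h2 : (i.val + m) % (2*m) = i.val - m := by
      rw [Nat.mod_eq_sub_mod (by omega)]
      have : i.val + m - 2*m = i.val - m := by omega
      rw [this]; exact Nat.mod_eq_of_lt (by omega)
    rw [h2, Nat.mod_eq_of_lt (by omega), Nat.mod_eq_sub_mod h, Nat.mod_eq_of_lt (by omega)]

lemma eq_or_tau (m : ℕ) (hm : 0 < m) (a b : Fin (2*m)) (h : a.val % m = b.val % m) :
    b = a ∨ b = tau m a := by
  have ha := a.isLt; have hb := b.isLt
  have tav : (tau m a).val = (a.val + m) % (2*m) := rfl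
  rcases Nat.lt_or_ge a.val m with h1 | h1 <;> rcases Nat.lt_or_ge b.val m with h2 | h2
  · left; ext; rw [Nat.mod_eq_of_lt h1, Nat.mod_eq_of_lt h2] at h; exact h.symm
  · right; ext
    rw [Nat.mod_eq_of_lt h1, Nat.mod_eq_sub_mod h2, Nat.mod_eq_of_lt (by omega)] at h
    rw [tav, Nat.mod_eq_of_lt (by omega)]; omega
  · right; ext
    rw [Nat.mod_eq_of_lt h2, Nat.mod_eq_sub_mod h1, Nat.mod_eq_of_lt (by omega)] at h
    rw [tav, Nat.mod_eq_sub_mod (by omega)]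
    have : a.val + m - 2*m = a.val - m := by omega
    rw [this, Nat.mod_eq_of_lt (by omega)]; omega
  · left; ext
    rw [Nat.mod_eq_sub_mod h1, Nat.mod_eq_of_lt (by omega),
        Nat.mod_eq_sub_mod h2, Nat.mod_eq_of_lt (by omega)] at h
    omega

lemma Pperm_ket (m : ℕ) (σ : Equiv.Perm (Fin (2*m))) (x : Bits m) :
    Pperm m σ (ket m x) = ket m (x ∘ ⇑σ⁻¹) := by
  funext y
  show (if y ∘ ⇑σ = x then (1:ℂ) else 0) = (if y = x ∘ ⇑σ⁻¹ then 1 else 0)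
  congr 1
  simp only [eq_iff_iff]
  constructor
  · rintro rfl; funext i; simp
  · rintro rfl; funext i; simp

lemma Pperm_fixes (m : ℕ) (_hm : 2 ≤ m) (σ : Equiv.Perm (Fin (2*m)))
    (hσ : ∀ i, σ (tau m i) = tau m (σ i)) (s : ZMod 2) :
    Pperm m σ (((Real.sqrt (2 ^ (m-1)) : ℂ))⁻¹ •
      ∑ b ∈ Finset.univ.filter (fun b : Fin m → ZMod 2 => ∑ i, b i = s), ket m (xb m b)) =
    ((Real.sqrt (2 ^ (m-1)) : ℂ))⁻¹ •
      ∑ b ∈ Finset.univ.filter (fun b : Fin m → ZMod 2 => ∑ i, b i = s), ket m (xb m b) := by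
  have hm0 : 0 < m := by omega
  have hσ' : ∀ i, σ⁻¹ (tau m i) = tau m (σ⁻¹ i) := by
    intro i
    have := hσ (σ⁻¹ i)
    rw [show σ (σ⁻¹ i) = i from σ.apply_symm_apply i] at this
    rw [← this, show σ⁻¹ (σ (tau m (σ⁻¹ i))) = tau m (σ⁻¹ i) from σ.symm_apply_apply _]
  set emb : Fin m → Fin (2*m) := fun j => ⟨j.val, by omega⟩ with hemb
  set ρf : Fin m → Fin m :=
    fun j => ⟨(σ⁻¹ (emb j)).val % m, Nat.mod_lt _ hm0⟩ with hρf
  -- key: (σ⁻¹ i) mod m is determined by i mod m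
  have keyA : ∀ i : Fin (2*m),
      (σ⁻¹ i).val % m = (ρf ⟨i.val % m, Nat.mod_lt _ hm0⟩).val := by
    intro i
    set j : Fin m := ⟨i.val % m, Nat.mod_lt _ hm0⟩ with hj
    have hmod : (emb j).val % m = i.val % m := by
      show (i.val % m) % m = i.val % m
      exact Nat.mod_mod_of_dvd i.val dvd_rfl
    rcases eq_or_tau m hm0 (emb j) i hmod with h | h
    · rw [h]
    · rw [h, hσ', tau_val_mod]
  have hinj : Function.Injective ρf := by
    intro j k hjk
    have hmod : (σ⁻¹ (emb j)).val % m = (σ⁻¹ (emb k)).val % m := by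
      have := congrArg Fin.val hjk; exact this
    rcases eq_or_tau m hm0 (σ⁻¹ (emb j)) (σ⁻¹ (emb k)) hmod with h | h
    · have := σ⁻¹.injective h
      ext; exact (congrArg Fin.val this).symm
    · exfalso
      rw [← hσ'] at h
      have h2 : emb k = tau m (emb j) := σ⁻¹.injective h
      have : (emb k).val = (j.val + m) % (2*m) := congrArg Fin.val h2
      have hje : (j.val + m) % (2*m) = j.val + m := Nat.mod_eq_of_lt (by have := j.isLt; omega)
      have hk := k.isLt
      simp only [hje] at this
      have : k.val = j.val + m := this
      omega
  have hbij : Function.Bijective ρf := Finite.injective_iff_bijective.mp hinj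
  set ρ : Equiv.Perm (Fin m) := Equiv.ofBijective ρf hbij with hρ
  have hρcoe : ⇑ρ = ρf := rfl
  have keyB : ∀ b : Fin m → ZMod 2, xb m b ∘ ⇑σ⁻¹ = xb m (b ∘ ρf) := by
    intro b; funext i
    show b ⟨(σ⁻¹ i).val % m, _⟩ = b (ρf ⟨i.val % m, _⟩)
    congr 1
    ext
    exact keyA i
  rw [map_smul, map_sum]
  congr 1
  have step1 : ∀ b : Fin m → ZMod 2,
      Pperm m σ (ket m (xb m b)) = ket m (xb m (b ∘ ρf)) := by
    intro b; rw [Pperm_ket, keyB]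
  rw [Finset.sum_congr rfl (fun b _ => step1 b)]
  -- reindex
  refine Finset.sum_equiv (Equiv.arrowCongr ρ.symm (Equiv.refl (ZMod 2))) ?_ ?_
  · intro b
    simp only [Finset.mem_filter, Finset.mem_univ, true_and]
    have : ∑ i, (Equiv.arrowCongr ρ.symm (Equiv.refl (ZMod 2)) b) i = ∑ i, b i := by
      show ∑ i, b (ρ i) = ∑ i, b i
      exact Equiv.sum_comp ρ b
    rw [this]
  · intro b _
    congr 1

/-- (Full Polytope Symmetry, part 2) For any permutation `σ` of the qubits commuting
with the antipodal involution `τ`, the operator `P_σ` preserves the code space of the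
X–I code `Ξ(2m)`; in fact it fixes both codewords `|0̄⟩` and `|1̄⟩`. -/
theorem XI_polytope_symmetry_codespace (m : ℕ) (hm : 2 ≤ m)
    (σ : Equiv.Perm (Fin (2*m))) (hσ : ∀ i, σ (tau m i) = tau m (σ i)) :
    (∀ v ∈ (Submodule.span ℂ {ket0 m, ket1 m} : Submodule ℂ (QState m)),
        Pperm m σ v ∈ (Submodule.span ℂ {ket0 m, ket1 m} : Submodule ℂ (QState m))) ∧
    Pperm m σ (ket0 m) = ket0 m ∧
    Pperm m σ (ket1 m) = ket1 m := by
  have h0 : Pperm m σ (ket0 m) = ket0 m := Pperm_fixes m hm σ hσ 0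
  have h1 : Pperm m σ (ket1 m) = ket1 m := Pperm_fixes m hm σ hσ 1
  refine ⟨?_, h0, h1⟩
  intro v hv
  have hle : Submodule.span ℂ {ket0 m, ket1 m} ≤
      Submodule.comap (Pperm m σ) (Submodule.span ℂ {ket0 m, ket1 m}) := by
    rw [Submodule.span_le]
    rintro x (rfl | rfl) <;> simp only [SetLike.mem_coe, Submodule.mem_comap]
    · rw [h0]; exact Submodule.subset_span (Set.mem_insert _ _)
    · rw [h1]; exact Submodule.subset_span (Set.mem_insert_of_mem _ rfl)
  exact hle hv
end
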